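/- arXiv:2303.17036 — 3 statements merged into one kernel-verified Lean document; each statement's English description precedes it below -/
import Mathlib

section
/- For every ν > −1 and every n ≥ 1, the zeros of Bessel functions satisfy the interlacing inequalities j_{ν,n} < j_{ν+1,n} < j_{ν,n+1}, where j_{ν,1} < j_{ν,2} < ... denote the positive zeros of J_ν in increasing order. -/
open Real

/-- The entire function `I_ν` with `I_ν(r) = r^{−ν} J_ν(r)` for `r > 0`. -/
noncomputable def besselI (ν : ℝ) (r : ℝ) : ℝ :=
  ∑' k : ℕ, ((-1 : ℝ) ^ k / ((k.factorial : ℝ) * Real.Gamma ((k : ℝ) + ν + 1)))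
    * r ^ (2 * k) / (2 : ℝ) ^ (2 * (k : ℝ) + ν)

/-- The Bessel function of the first kind `J_ν`. -/
noncomputable def besselJ (ν : ℝ) (r : ℝ) : ℝ := r ^ ν * besselI ν r

namespace BesselAux

noncomputable def A (ν : ℝ) (k : ℕ) : ℝ :=
  (-1 : ℝ) ^ k / ((k.factorial : ℝ) * Real.Gamma ((k : ℝ) + ν + 1)) / (2 : ℝ) ^ (2 * (k : ℝ) + ν)

lemma besselI_eq (ν r : ℝ) : besselI ν r = ∑' k : ℕ, A ν k * r ^ (2 * k) := by
  unfold besselI A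
  exact tsum_congr fun k => by ring

lemma gamma_pos {ν : ℝ} (hν : -1 < ν) (k : ℕ) : 0 < Real.Gamma ((k : ℝ) + ν + 1) := by
  apply Real.Gamma_pos_of_pos
  have : (0:ℝ) ≤ k := Nat.cast_nonneg k
  linarith

lemma kν_pos {ν : ℝ} (hν : -1 < ν) (k : ℕ) : 0 < (k : ℝ) + ν + 1 := by
  have : (0:ℝ) ≤ k := Nat.cast_nonneg k
  linarith

lemma two_rpow_pos (x : ℝ) : 0 < (2:ℝ) ^ x := Real.rpow_pos_of_pos (by norm_num) x

lemma A_succ {ν : ℝ} (hν : -1 < ν) (k : ℕ) :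
    A ν (k+1) = -A ν k / (4 * ((k:ℝ)+1) * ((k:ℝ) + ν + 1)) := by
  have hkν := (kν_pos hν k).ne'
  have hΓ := (gamma_pos hν k).ne'
  have hfac : ((k.factorial : ℝ)) ≠ 0 := by exact_mod_cast k.factorial_ne_zero
  have h2 := (two_rpow_pos (2 * (k:ℝ) + ν)).ne'
  have hk1 : ((k:ℝ) + 1) ≠ 0 := by positivity
  unfold A
  rw [Nat.factorial_succ]
  push_cast
  rw [show (k:ℝ) + 1 + ν + 1 = ((k:ℝ) + ν + 1) + 1 by ring, Real.Gamma_add_one hkν,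
    show 2 * ((k:ℝ) + 1) + ν = (2 * (k:ℝ) + ν) + 2 by ring, Real.rpow_add (by norm_num),
    show (2:ℝ) ^ (2:ℝ) = 4 by rw [show (2:ℝ) = ((2:ℕ):ℝ) by norm_num, Real.rpow_natCast]; norm_num]
  rw [pow_succ]
  field_simp

lemma A_shift {ν : ℝ} (hν : -1 < ν) (k : ℕ) :
    A (ν+1) k = A ν k / (2 * ((k:ℝ) + ν + 1)) := by
  have hkν := (kν_pos hν k).ne'
  have hΓ := (gamma_pos hν k).ne'
  have hfac : ((k.factorial : ℝ)) ≠ 0 := by exact_mod_cast k.factorial_ne_zero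
  have h2 := (two_rpow_pos (2 * (k:ℝ) + ν)).ne'
  unfold A
  rw [show (k:ℝ) + (ν+1) + 1 = ((k:ℝ) + ν + 1) + 1 by ring, Real.Gamma_add_one hkν,
    show 2 * (k:ℝ) + (ν+1) = (2 * (k:ℝ) + ν) + 1 by ring, Real.rpow_add_one (by norm_num)]
  field_simp

lemma summable_master {ν : ℝ} (hν : -1 < ν) (R : ℝ) :
    Summable (fun k : ℕ => (2*(k:ℝ)+2) * |A ν k| * R ^ (2*k)) := by
  apply summable_of_ratio_norm_eventually_le (r := 1/2) (by norm_num)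
  have hev : ∀ᶠ k : ℕ in Filter.atTop, R^2 ≤ (k:ℝ) ∧ |ν| ≤ (k:ℝ) := by
    filter_upwards [Filter.eventually_ge_atTop ⌈R^2⌉₊, Filter.eventually_ge_atTop ⌈|ν|⌉₊]
      with k h1 h2
    exact ⟨le_trans (Nat.le_ceil _) (by exact_mod_cast h1),
      le_trans (Nat.le_ceil _) (by exact_mod_cast h2)⟩
  filter_upwards [hev] with k hk
  obtain ⟨hk1, hk2⟩ := hk
  have hD : (0:ℝ) < 4 * ((k:ℝ)+1) * ((k:ℝ) + ν + 1) := by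
    have := kν_pos hν k; positivity
  have hAk1 : |A ν (k+1)| = |A ν k| / (4 * ((k:ℝ)+1) * ((k:ℝ) + ν + 1)) := by
    rw [A_succ hν, abs_div, abs_neg, abs_of_pos hD]
  have hν4 : 1 ≤ (k:ℝ) + ν + 1 := by
    have := neg_abs_le ν; linarith
  have hq : (2*(k:ℝ)+4) * R^2 / (4 * ((k:ℝ)+1) * ((k:ℝ) + ν + 1)) ≤ (k:ℝ)+1 := by
    rw [div_le_iff₀ hD]
    have hc : (0:ℝ) ≤ (k:ℝ) := Nat.cast_nonneg k
    nlinarith [sq_nonneg R, mul_le_mul_of_nonneg_left hk1 (show (0:ℝ) ≤ 2*(k:ℝ)+4 by linarith)]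
  have hRk : ∀ m : ℕ, (0:ℝ) ≤ R ^ (2*m) := fun m => by
    rw [pow_mul]; positivity
  have hnn : ∀ m : ℕ, (0:ℝ) ≤ (2*(m:ℝ)+2) * |A ν m| * R ^ (2*m) := fun m => by
    have := hRk m; positivity
  rw [Real.norm_eq_abs, Real.norm_eq_abs,
    abs_of_nonneg (hnn (k+1)), abs_of_nonneg (hnn k)]
  push_cast
  rw [hAk1, show 2*(k+1) = 2*k+2 by ring, pow_add]
  have hRk' := hRk k
  calc (2*((k:ℝ)+1)+2) * (|A ν k| / (4 * ((k:ℝ)+1) * ((k:ℝ) + ν + 1))) * (R^(2*k) * R^2)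
      = (|A ν k| * R^(2*k)) * ((2*(k:ℝ)+4) * R^2 / (4 * ((k:ℝ)+1) * ((k:ℝ) + ν + 1))) := by
        ring
    _ ≤ (|A ν k| * R^(2*k)) * ((k:ℝ)+1) := by
        apply mul_le_mul_of_nonneg_left hq (by have := hRk' ; positivity)
    _ = 1/2 * ((2*(k:ℝ)+2) * |A ν k| * R^(2*k)) := by ring


lemma summable_S1 {ν : ℝ} (hν : -1 < ν) (y : ℝ) :
    Summable (fun k : ℕ => A ν k * y ^ (2*k)) := by
  apply Summable.of_norm_bounded (summable_master hν (|y|))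
  intro k
  rw [norm_mul, Real.norm_eq_abs, Real.norm_eq_abs, abs_pow]
  have h1 : (0:ℝ) ≤ |A ν k| := abs_nonneg _
  have h2 : (0:ℝ) ≤ |y| ^ (2*k) := by positivity
  nlinarith [mul_nonneg (mul_nonneg (Nat.cast_nonneg (α := ℝ) k) h1) h2, mul_nonneg h1 h2]

lemma summable_S2 {ν : ℝ} (hν : -1 < ν) {y R : ℝ} (hy : |y| ≤ R) (hR : 1 ≤ R) (k : ℕ) :
    ‖A ν k * (((2*k : ℕ):ℝ) * y ^ (2*k-1))‖ ≤ (2*(k:ℝ)+2) * |A ν k| * R ^ (2*k) := by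
  rw [norm_mul, norm_mul, Real.norm_eq_abs, Real.norm_eq_abs, Real.norm_eq_abs, abs_pow]
  have h0 : (0:ℝ) ≤ R := le_trans zero_le_one hR
  have h1 : |y| ^ (2*k-1) ≤ R ^ (2*k-1) := pow_le_pow_left₀ (abs_nonneg y) hy _
  have h2 : R ^ (2*k-1) ≤ R ^ (2*k) := pow_le_pow_right₀ hR (Nat.sub_le _ _)
  have h3 : |((2*k : ℕ):ℝ)| = 2*(k:ℝ) := by
    rw [abs_of_nonneg (by positivity)]; push_cast; ring
  rw [h3]
  have h4 : (0:ℝ) ≤ |A ν k| := abs_nonneg _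
  have h5 : |y| ^ (2*k-1) ≤ R ^ (2*k) := le_trans h1 h2
  have h6 : (0:ℝ) ≤ |y| ^ (2*k-1) := by positivity
  nlinarith [mul_le_mul_of_nonneg_left h5
      (show (0:ℝ) ≤ 2*(k:ℝ)*|A ν k| by positivity),
    mul_nonneg h4 (pow_nonneg h0 (2*k))]

lemma besselI_hasDerivAt {ν : ℝ} (hν : -1 < ν) (r : ℝ) :
    HasDerivAt (besselI ν) (-r * besselI (ν+1) r) r := by
  have hν1 : (-1:ℝ) < ν + 1 := by linarith
  set R : ℝ := |r| + 1 with hR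
  have hrR : |r| < R := by rw [hR]; exact lt_add_one _
  have hR1 : 1 ≤ R := by have := abs_nonneg r; rw [hR]; linarith
  have hmem : r ∈ Set.Ioo (-R) R := by
    obtain ⟨h1, h2⟩ := abs_lt.mp hrR
    exact ⟨h1, h2⟩
  have key : HasDerivAt (fun z => ∑' k : ℕ, A ν k * z ^ (2*k))
      (∑' k : ℕ, A ν k * (((2*k : ℕ):ℝ) * r ^ (2*k-1))) r := by
    apply hasDerivAt_tsum_of_isPreconnected (summable_master hν R) isOpen_Ioo
      isPreconnected_Ioo (y₀ := r) (fun k y _ => (hasDerivAt_pow (2*k) y).const_mul (A ν k))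
      ?_ hmem (summable_S1 hν r) hmem
    intro k y hy
    exact summable_S2 hν (le_of_lt (abs_lt.mpr ⟨hy.1, hy.2⟩)) hR1 k
  have hfun : besselI ν = fun z => ∑' k : ℕ, A ν k * z ^ (2*k) := funext fun z => besselI_eq ν z
  rw [hfun]
  convert key using 1
  -- show -r * besselI (ν+1) r = ∑' k, A ν k * ((2k) * r^(2k-1))
  have hsum : Summable (fun k : ℕ => A ν k * (((2*k : ℕ):ℝ) * r ^ (2*k-1))) := by
    apply Summable.of_norm_bounded (summable_master hν R)
    intro k
    exact summable_S2 hν hrR.le hR1 k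
  rw [Summable.tsum_eq_zero_add hsum]
  simp only [Nat.mul_zero, Nat.cast_zero, zero_mul, mul_zero, zero_add]
  rw [besselI_eq, ← tsum_mul_left]
  apply tsum_congr
  intro k
  have hkν := (kν_pos hν k).ne'
  have hk1 : ((k:ℝ) + 1) ≠ 0 := by positivity
  rw [A_shift hν k, A_succ hν k]
  rw [show 2*(k+1)-1 = 2*k+1 by omega, pow_succ]
  push_cast
  field_simp
  ring

lemma besselI_rec {ν : ℝ} (hν : -1 < ν) (r : ℝ) :
    besselI ν r = (2*ν+2) * besselI (ν+1) r - r^2 * besselI (ν+2) r := by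
  have hν1 : (-1:ℝ) < ν + 1 := by linarith
  have key : besselI ν r - (2*ν+2) * besselI (ν+1) r = -(r^2 * besselI (ν+2) r) := by
    rw [besselI_eq, besselI_eq, ← tsum_mul_left,
      ← Summable.tsum_sub (summable_S1 hν r) ((summable_S1 hν1 r).mul_left _)]
    have step : ∀ k : ℕ, A ν k * r^(2*k) - (2*ν+2) * (A (ν+1) k * r^(2*k))
        = ((k:ℝ)/((k:ℝ)+ν+1)) * A ν k * r^(2*k) := by
      intro k
      have hkν := (kν_pos hν k).ne'
      rw [A_shift hν k]
      field_simp
      ring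
    rw [tsum_congr step]
    have hsum : Summable (fun k : ℕ => ((k:ℝ)/((k:ℝ)+ν+1)) * A ν k * r^(2*k)) := by
      apply Summable.of_norm_bounded (summable_master hν (|r|))
      intro k
      rw [norm_mul, norm_mul, Real.norm_eq_abs, Real.norm_eq_abs, Real.norm_eq_abs, abs_pow]
      have h1 : |(k:ℝ)/((k:ℝ)+ν+1)| ≤ 1 := by
        rw [abs_div, abs_of_nonneg (Nat.cast_nonneg k), abs_of_pos (kν_pos hν k),
          div_le_one (kν_pos hν k)]
        linarith
      have h2 : (0:ℝ) ≤ |A ν k| := abs_nonneg _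
      have h3 : (0:ℝ) ≤ |r| ^ (2*k) := by positivity
      nlinarith [mul_le_mul_of_nonneg_right (mul_le_mul_of_nonneg_right h1 h2) h3,
        mul_nonneg h2 h3, mul_nonneg (mul_nonneg (Nat.cast_nonneg (α := ℝ) k) h2) h3]
    rw [Summable.tsum_eq_zero_add hsum]
    simp only [Nat.cast_zero, zero_div, zero_mul, zero_add]
    rw [besselI_eq, ← tsum_mul_left, ← tsum_neg]
    apply tsum_congr
    intro k
    have hkν := (kν_pos hν k).ne'
    have hkν2 : ((k:ℝ) + ν + 2) ≠ 0 := by have := kν_pos hν k; intro h; rw [show (k:ℝ)+ν+2 = ((k:ℝ)+ν+1)+1 by ring] at h; linarith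
    have hk1 : ((k:ℝ) + 1) ≠ 0 := by positivity
    have e2 := A_shift hν1 k
    rw [show ν + 1 + 1 = ν + 2 by ring] at e2
    rw [A_succ hν k, e2, A_shift hν k]
    rw [show 2*(k+1) = 2*k+1+1 by omega, pow_succ, pow_succ]
    push_cast
    rw [show (k:ℝ) + (ν+1) + 1 = (k:ℝ) + ν + 2 by ring,
      show (k:ℝ) + 1 + ν + 1 = (k:ℝ) + ν + 2 by ring]
    field_simp
    ring
  linarith


lemma besselI_continuous {ν : ℝ} (hν : -1 < ν) : Continuous (besselI ν) :=
  continuous_iff_continuousAt.mpr fun r =>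
    (besselI_hasDerivAt hν r).differentiableAt.continuousAt

lemma besselJ_zero_iff {μ r : ℝ} (hr : 0 < r) : besselJ μ r = 0 ↔ besselI μ r = 0 := by
  unfold besselJ
  constructor
  · intro h
    rcases mul_eq_zero.mp h with h | h
    · exact absurd h (Real.rpow_pos_of_pos hr μ).ne'
    · exact h
  · intro h; rw [h, mul_zero]

lemma zeros_step_up {ν : ℝ} (hν : -1 < ν) {p q : ℝ} (hp : 0 < p) (hpq : p < q)
    (h1 : besselI ν p = 0) (h2 : besselI ν q = 0) :
    ∃ c, p < c ∧ c < q ∧ besselI (ν+1) c = 0 := by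
  obtain ⟨c, hc, hc0⟩ := exists_hasDerivAt_eq_zero (f' := fun x => -x * besselI (ν+1) x)
    hpq ((besselI_continuous hν).continuousOn) (h1.trans h2.symm)
    (fun x _ => besselI_hasDerivAt hν x)
  refine ⟨c, hc.1, hc.2, ?_⟩
  have hc' : (0:ℝ) < c := lt_trans hp hc.1
  rcases mul_eq_zero.mp hc0 with h | h
  · exact absurd h (by simpa using hc'.ne')
  · exact h

lemma zeros_step_down {ν : ℝ} (hν : -1 < ν) {p q : ℝ} (hp : 0 ≤ p) (hpq : p < q)
    (h1 : p = 0 ∨ besselI (ν+1) p = 0) (h2 : besselI (ν+1) q = 0) :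
    ∃ c, p < c ∧ c < q ∧ besselI ν c = 0 := by
  have hν1 : (-1:ℝ) < ν + 1 := by linarith
  have hν2 : (0:ℝ) < 2*ν+2 := by linarith
  set g : ℝ → ℝ := fun x => x ^ (2*ν+2) * besselI (ν+1) x with hg
  have hgp : g p = 0 := by
    rcases h1 with h | h
    · simp only [hg, h, Real.zero_rpow hν2.ne', zero_mul]
    · simp only [hg, h, mul_zero]
  have hgq : g q = 0 := by simp only [hg, h2, mul_zero]
  have hgc : ContinuousOn g (Set.Icc p q) := by
    apply ContinuousOn.mul _ ((besselI_continuous hν1).continuousOn)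
    intro x _
    exact (Real.continuousAt_rpow_const x (2*ν+2) (Or.inr hν2.le)).continuousWithinAt
  have hderiv : ∀ x ∈ Set.Ioo p q, HasDerivAt g
      ((2*ν+2) * x ^ (2*ν+1) * besselI (ν+1) x + x ^ (2*ν+2) * (-x * besselI (ν+2) x)) x := by
    intro x hx
    have hxpos : (0:ℝ) < x := lt_of_le_of_lt hp hx.1
    have hd1 : HasDerivAt (fun y : ℝ => y ^ (2*ν+2)) ((2*ν+2) * x ^ (2*ν+1)) x := by
      have := Real.hasDerivAt_rpow_const (x := x) (p := 2*ν+2) (Or.inl hxpos.ne')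
      rwa [show 2*ν+2-1 = 2*ν+1 by ring] at this
    have hd2 := besselI_hasDerivAt hν1 x
    rw [show ν + 1 + 1 = ν + 2 by ring] at hd2
    exact hd1.mul hd2
  obtain ⟨c, hc, hc0⟩ := exists_hasDerivAt_eq_zero hpq hgc (hgp.trans hgq.symm) hderiv
  refine ⟨c, hc.1, hc.2, ?_⟩
  have hcpos : (0:ℝ) < c := lt_of_le_of_lt hp hc.1
  have hrec := besselI_rec hν c
  have hcp : c ^ (2*ν+2) = c ^ (2*ν+1) * c := by
    rw [show 2*ν+2 = (2*ν+1) + 1 by ring, Real.rpow_add_one hcpos.ne']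
  have hz : c ^ (2*ν+1) * besselI ν c = 0 := by
    rw [hrec]
    rw [hcp] at hc0
    nlinarith [hc0]
  rcases mul_eq_zero.mp hz with h | h
  · exact absurd h (Real.rpow_pos_of_pos hcpos (2*ν+1)).ne'
  · exact h

end BesselAux

/-- Let `j μ n` (for `n ≥ 1`) enumerate the positive zeros of the Bessel
function `J_μ` in increasing order, for every `μ > −1`. Then, for every `ν > −1` and every
`n ≥ 1`, the interlacing inequalities `j_{ν,n} < j_{ν+1,n} < j_{ν,n+1}` hold. -/
theorem bessel_zeros_interlacing
    (j : ℝ → ℕ → ℝ)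
    (hpos : ∀ μ : ℝ, -1 < μ → ∀ n : ℕ, 1 ≤ n → 0 < j μ n)
    (hzero : ∀ μ : ℝ, -1 < μ → ∀ n : ℕ, 1 ≤ n → besselJ μ (j μ n) = 0)
    (hmono : ∀ μ : ℝ, -1 < μ → ∀ n m : ℕ, 1 ≤ n → n < m → j μ n < j μ m)
    (hall : ∀ μ : ℝ, -1 < μ → ∀ r : ℝ, 0 < r → besselJ μ r = 0 → ∃ n : ℕ, 1 ≤ n ∧ j μ n = r)
    (ν : ℝ) (hν : -1 < ν) (n : ℕ) (hn : 1 ≤ n) :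
    j ν n < j (ν + 1) n ∧ j (ν + 1) n < j ν (n + 1) := by
  have hzI : ∀ μ : ℝ, -1 < μ → ∀ n : ℕ, 1 ≤ n → besselI μ (j μ n) = 0 := fun μ hμ n hn =>
    (BesselAux.besselJ_zero_iff (hpos μ hμ n hn)).mp (hzero μ hμ n hn)
  have hle : ∀ μ : ℝ, -1 < μ → ∀ m n : ℕ, 1 ≤ m → m ≤ n → j μ m ≤ j μ n := by
    intro μ hμ m n hm hmn
    rcases eq_or_lt_of_le hmn with rfl | h
    · exact le_rfl
    · exact (hmono μ hμ m n hm h).le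
  have hν1 : (-1:ℝ) < ν + 1 := by linarith
  induction n, hn using Nat.le_induction with
  | base =>
    constructor
    · obtain ⟨c, hc1, hc2, hc3⟩ := BesselAux.zeros_step_down hν (le_refl (0:ℝ))
        (hpos (ν+1) hν1 1 le_rfl) (Or.inl rfl) (hzI (ν+1) hν1 1 le_rfl)
      obtain ⟨m, hm1, hm2⟩ := hall ν hν c hc1 ((BesselAux.besselJ_zero_iff hc1).mpr hc3)
      calc j ν 1 ≤ j ν m := hle ν hν 1 m le_rfl hm1
        _ = c := hm2
        _ < j (ν+1) 1 := hc2
    · obtain ⟨c, hc1, hc2, hc3⟩ := BesselAux.zeros_step_up hν (hpos ν hν 1 le_rfl)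
        (hmono ν hν 1 2 le_rfl one_lt_two) (hzI ν hν 1 le_rfl) (hzI ν hν 2 (by norm_num))
      have hc0 : 0 < c := lt_trans (hpos ν hν 1 le_rfl) hc1
      obtain ⟨m, hm1, hm2⟩ := hall (ν+1) hν1 c hc0 ((BesselAux.besselJ_zero_iff hc0).mpr hc3)
      calc j (ν+1) 1 ≤ j (ν+1) m := hle (ν+1) hν1 1 m le_rfl hm1
        _ = c := hm2
        _ < j ν 2 := hc2
  | succ n hn ih =>
    obtain ⟨ih1, ih2⟩ := ih
    constructor
    · obtain ⟨c, hc1, hc2, hc3⟩ := BesselAux.zeros_step_down hν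
        (hpos (ν+1) hν1 n hn).le (hmono (ν+1) hν1 n (n+1) hn (lt_add_one n))
        (Or.inr (hzI (ν+1) hν1 n hn)) (hzI (ν+1) hν1 (n+1) (by omega))
      have hc0 : 0 < c := lt_trans (hpos (ν+1) hν1 n hn) hc1
      obtain ⟨m, hm1, hm2⟩ := hall ν hν c hc0 ((BesselAux.besselJ_zero_iff hc0).mpr hc3)
      have hmn : n + 1 ≤ m := by
        by_contra h
        push_neg at h
        have h' : j ν m ≤ j ν n := hle ν hν m n hm1 (by omega)
        rw [hm2] at h'
        linarith
      calc j ν (n+1) ≤ j ν m := hle ν hν (n+1) m (by omega) hmn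
        _ = c := hm2
        _ < j (ν+1) (n+1) := hc2
    · obtain ⟨c, hc1, hc2, hc3⟩ := BesselAux.zeros_step_up hν (hpos ν hν (n+1) (by omega))
        (hmono ν hν (n+1) (n+2) (by omega) (by omega)) (hzI ν hν (n+1) (by omega))
        (hzI ν hν (n+2) (by omega))
      have hc0 : 0 < c := lt_trans (hpos ν hν (n+1) (by omega)) hc1
      obtain ⟨m, hm1, hm2⟩ := hall (ν+1) hν1 c hc0 ((BesselAux.besselJ_zero_iff hc0).mpr hc3)
      have hmn : n + 1 ≤ m := by
        by_contra h
        push_neg at h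
        have h' : j (ν+1) m ≤ j (ν+1) n := hle (ν+1) hν1 m n hm1 (by omega)
        rw [hm2] at h'
        linarith
      calc j (ν+1) (n+1) ≤ j (ν+1) m := hle (ν+1) hν1 (n+1) m (by omega) hmn
        _ = c := hm2
        _ < j ν (n+2) := hc2
end

section
/- With ρ(τ) := −(cos τ + (1 + τ tan τ)/cos τ), for all λ, t ∈ [0,1] one has ρ(1)/cos(1) ≤ ρ(λt)/cos(λt) ≤ −2. -/
open Real

private lemma cos_pos_aux {x : ℝ} (h0 : 0 ≤ x) (h1 : x ≤ 1) : 0 < Real.cos x :=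
  Real.cos_pos_of_mem_Ioo ⟨by nlinarith [Real.pi_gt_three], by nlinarith [Real.pi_gt_three]⟩

private lemma h_mono : MonotoneOn
    (fun x : ℝ => (Real.cos x + x * Real.sin x) / Real.cos x ^ 3) (Set.Icc 0 1) := by
  apply monotoneOn_of_deriv_nonneg (convex_Icc 0 1)
  · apply ContinuousOn.div
    · fun_prop
    · fun_prop
    · intro x hx
      exact pow_ne_zero 3 (cos_pos_aux hx.1 hx.2).ne'
  · rw [interior_Icc]
    intro x hx
    have hc : Real.cos x ≠ 0 := (cos_pos_aux hx.1.le hx.2.le).ne'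
    have hu : HasDerivAt (fun x : ℝ => Real.cos x + x * Real.sin x)
        (x * Real.cos x) x := by
      have := (Real.hasDerivAt_cos x).add ((hasDerivAt_id x).mul (Real.hasDerivAt_sin x))
      exact this.congr_deriv (by simp only [id_eq]; ring)
    have hv : HasDerivAt (fun x : ℝ => Real.cos x ^ 3)
        (3 * Real.cos x ^ 2 * (-Real.sin x)) x := by
      have := (Real.hasDerivAt_cos x).fun_pow 3
      exact this.congr_deriv (by norm_num)
    exact ((hu.div hv (pow_ne_zero 3 hc)).differentiableAt).differentiableWithinAt
  · rw [interior_Icc]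
    intro x hx
    have hcpos : 0 < Real.cos x := cos_pos_aux hx.1.le hx.2.le
    have hc : Real.cos x ≠ 0 := hcpos.ne'
    have hu : HasDerivAt (fun x : ℝ => Real.cos x + x * Real.sin x)
        (x * Real.cos x) x := by
      have := (Real.hasDerivAt_cos x).add ((hasDerivAt_id x).mul (Real.hasDerivAt_sin x))
      exact this.congr_deriv (by simp only [id_eq]; ring)
    have hv : HasDerivAt (fun x : ℝ => Real.cos x ^ 3)
        (3 * Real.cos x ^ 2 * (-Real.sin x)) x := by
      have := (Real.hasDerivAt_cos x).fun_pow 3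
      exact this.congr_deriv (by norm_num)
    have hd := (hu.fun_div hv (pow_ne_zero 3 hc)).deriv
    rw [hd]
    have hs : 0 ≤ Real.sin x :=
      Real.sin_nonneg_of_nonneg_of_le_pi hx.1.le (by linarith [Real.pi_gt_three, hx.2.le])
    apply div_nonneg
    · have hrw : x * Real.cos x * Real.cos x ^ 3 -
          (Real.cos x + x * Real.sin x) * (3 * Real.cos x ^ 2 * -Real.sin x) =
          x * Real.cos x ^ 4 + 3 * Real.sin x * Real.cos x ^ 2 * (Real.cos x + x * Real.sin x) := by
        ring
      rw [hrw]
      have h1 : 0 ≤ x * Real.cos x ^ 4 := mul_nonneg hx.1.le (by positivity)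
      have h2 : 0 ≤ Real.cos x + x * Real.sin x := by
        have := mul_nonneg hx.1.le hs
        linarith
      have h3 : 0 ≤ 3 * Real.sin x * Real.cos x ^ 2 := by positivity
      nlinarith [mul_nonneg h3 h2]
    · positivity

private lemma rho_eq (ρ : ℝ → ℝ)
    (hρ : ρ = fun τ => -(Real.cos τ + (1 + τ * Real.tan τ) / Real.cos τ))
    {x : ℝ} (hc : Real.cos x ≠ 0) :
    ρ x / Real.cos x = -(1 + (Real.cos x + x * Real.sin x) / Real.cos x ^ 3) := by
  rw [hρ]
  simp only
  rw [Real.tan_eq_sin_div_cos]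
  have : Real.sin x ^ 2 = 1 - Real.cos x ^ 2 := by nlinarith [Real.sin_sq_add_cos_sq x]
  field_simp

/-- With `ρ(τ) := −(cos τ + (1 + τ tan τ)/cos τ)`, for all `λ, t ∈ [0,1]`
one has `ρ(1)/cos(1) ≤ ρ(λt)/cos(λt) ≤ −2`. -/
theorem rho_over_cos_bounds
    (ρ : ℝ → ℝ)
    (hρ : ρ = fun τ => -(Real.cos τ + (1 + τ * Real.tan τ) / Real.cos τ)) :
    ∀ lam ∈ Set.Icc (0 : ℝ) 1, ∀ t ∈ Set.Icc (0 : ℝ) 1,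
      ρ 1 / Real.cos 1 ≤ ρ (lam * t) / Real.cos (lam * t)
        ∧ ρ (lam * t) / Real.cos (lam * t) ≤ -2 := by
  intro lam hlam t ht
  set s := lam * t with hs
  have hs0 : 0 ≤ s := mul_nonneg hlam.1 ht.1
  have hs1 : s ≤ 1 := mul_le_one₀ hlam.2 ht.1 ht.2
  have hcs : 0 < Real.cos s := cos_pos_aux hs0 hs1
  have hc1 : 0 < Real.cos 1 := cos_pos_aux zero_le_one le_rfl
  have e1 := rho_eq ρ hρ hc1.ne'
  have es := rho_eq ρ hρ hcs.ne'
  rw [e1, es]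
  constructor
  · have := h_mono ⟨hs0, hs1⟩ (Set.mem_Icc.mpr ⟨zero_le_one, le_rfl⟩) hs1
    simp only at this
    linarith
  · have hsin : 0 ≤ Real.sin s :=
      Real.sin_nonneg_of_nonneg_of_le_pi hs0 (by nlinarith [Real.pi_gt_three])
    have h1 : (1 : ℝ) ≤ (Real.cos s + s * Real.sin s) / Real.cos s ^ 3 := by
      rw [one_le_div (by positivity)]
      have hc3 : Real.cos s ^ 3 ≤ Real.cos s := by
        nlinarith [Real.cos_le_one s, hcs, mul_pos hcs hcs]
      have := mul_nonneg hs0 hsin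
      linarith
    linarith
end

section
/- Let N ≥ 1 and m ≥ 1, and set λ_m := j_{N/2,m}² − j_{N/2−1,1}². Suppose ℓ ≥ 1 and k ≥ 1 are integers with ℓ²λ_m = j_{N/2,m}² − j_{N/2−1,k}². Then ℓ = 1 and k = 1. -/
open Real

namespace KernelAux

noncomputable def aCoef (ν : ℝ) (k : ℕ) : ℝ :=
  (-1 : ℝ) ^ k / ((k.factorial : ℝ) * Real.Gamma ((k : ℝ) + ν + 1) * 4 ^ k * (2 : ℝ) ^ ν)

lemma gamma_pos {ν : ℝ} (hν : -1 < ν) (k : ℕ) : 0 < Real.Gamma ((k : ℝ) + ν + 1) := by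
  apply Real.Gamma_pos_of_pos
  have : (0:ℝ) ≤ (k:ℝ) := Nat.cast_nonneg k
  linarith

lemma den_pos {ν : ℝ} (hν : -1 < ν) (k : ℕ) :
    0 < (k.factorial : ℝ) * Real.Gamma ((k : ℝ) + ν + 1) * 4 ^ k * (2 : ℝ) ^ ν := by
  have h1 : (0:ℝ) < (k.factorial : ℝ) := by exact_mod_cast k.factorial_pos
  have h2 := gamma_pos hν k
  have h3 : (0:ℝ) < (4:ℝ) ^ k := by positivity
  have h4 : (0:ℝ) < (2:ℝ) ^ ν := Real.rpow_pos_of_pos (by norm_num) ν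
  positivity

lemma aCoef_abs {ν : ℝ} (hν : -1 < ν) (k : ℕ) :
    |aCoef ν k| = 1 / ((k.factorial : ℝ) * Real.Gamma ((k : ℝ) + ν + 1) * 4 ^ k * (2 : ℝ) ^ ν) := by
  rw [aCoef, abs_div, abs_pow, abs_neg, abs_one, one_pow, abs_of_pos (den_pos hν k)]

lemma aCoef_ratio {ν : ℝ} (hν : -1 < ν) (k : ℕ) :
    |aCoef ν (k+1)| * (4 * ((k:ℝ)+1) * ((k:ℝ)+ν+1)) = |aCoef ν k| := by
  rw [aCoef_abs hν, aCoef_abs hν]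
  have harg : ((k+1:ℕ):ℝ) + ν + 1 = ((k:ℝ) + ν + 1) + 1 := by push_cast; ring
  have hne : (k:ℝ) + ν + 1 ≠ 0 := by
    have : (0:ℝ) ≤ (k:ℝ) := Nat.cast_nonneg k
    intro h; linarith [hν]
  rw [harg, Real.Gamma_add_one hne]
  have hfac : ((k+1).factorial : ℝ) = ((k:ℝ)+1) * (k.factorial : ℝ) := by
    rw [Nat.factorial_succ]; push_cast; ring
  rw [hfac]
  have h1 : ((k.factorial : ℝ)) ≠ 0 := by exact_mod_cast k.factorial_ne_zero
  have h2 : Real.Gamma ((k : ℝ) + ν + 1) ≠ 0 := ne_of_gt (gamma_pos hν k)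
  have h3 : ((4:ℝ) ^ k) ≠ 0 := by positivity
  have h4 : ((2:ℝ) ^ ν) ≠ 0 := ne_of_gt (Real.rpow_pos_of_pos (by norm_num) ν)
  have h5 : (k:ℝ) + 1 ≠ 0 := by positivity
  field_simp
  ring

lemma summable_aux {ν : ℝ} (hν : -1 < ν) {R : ℝ} (hR : 0 ≤ R) :
    Summable (fun k : ℕ => |aCoef ν k| * ((k:ℝ)+1) * R ^ k) := by
  apply summable_of_ratio_norm_eventually_le (r := 1/2) (by norm_num)
  obtain ⟨K, hK⟩ := exists_nat_ge (max R (-ν))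
  filter_upwards [Filter.eventually_ge_atTop K] with k hk
  have hkK : (K:ℝ) ≤ (k:ℝ) := by exact_mod_cast hk
  have hRk : R ≤ (k:ℝ) := le_trans (le_trans (le_max_left _ _) hK) hkK
  have hνk : (1:ℝ) ≤ (k:ℝ) + ν + 1 := by
    have : -ν ≤ (k:ℝ) := le_trans (le_trans (le_max_right _ _) hK) hkK
    linarith
  have ha1 : 0 ≤ |aCoef ν (k+1)| := abs_nonneg _
  have ha0 : 0 ≤ |aCoef ν k| := abs_nonneg _
  have hRkpow : (0:ℝ) ≤ R ^ k := pow_nonneg hR k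
  have hA : (0:ℝ) ≤ |aCoef ν (k+1)| * ((((k+1):ℕ):ℝ)+1) * R ^ (k+1) :=
    mul_nonneg (mul_nonneg ha1 (by positivity)) (pow_nonneg hR _)
  have hB : (0:ℝ) ≤ |aCoef ν k| * ((k:ℝ)+1) * R ^ k :=
    mul_nonneg (mul_nonneg ha0 (by positivity)) hRkpow
  rw [Real.norm_of_nonneg hA, Real.norm_of_nonneg hB]
  have hr := aCoef_ratio hν k
  have key : ((k:ℝ)+1+1) * R ≤ (1/2) * (4 * ((k:ℝ)+1) * ((k:ℝ)+ν+1)) * ((k:ℝ)+1) := by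
    nlinarith [Nat.cast_nonneg (α := ℝ) k,
      mul_le_mul_of_nonneg_left hRk (by positivity : (0:ℝ) ≤ (k:ℝ)+2),
      mul_le_mul_of_nonneg_left hνk (by positivity : (0:ℝ) ≤ 2*((k:ℝ)+1)^2)]
  calc |aCoef ν (k+1)| * (((k+1:ℕ):ℝ)+1) * R ^ (k+1)
      = (|aCoef ν (k+1)| * R ^ k) * (((k:ℝ)+1+1) * R) := by push_cast; ring
    _ ≤ (|aCoef ν (k+1)| * R ^ k) * ((1/2) * (4 * ((k:ℝ)+1) * ((k:ℝ)+ν+1)) * ((k:ℝ)+1)) := by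
        apply mul_le_mul_of_nonneg_left key (by positivity)
    _ = (1/2) * ((|aCoef ν (k+1)| * (4 * ((k:ℝ)+1) * ((k:ℝ)+ν+1))) * (((k:ℝ)+1) * R ^ k)) := by
        ring
    _ = 1/2 * (|aCoef ν k| * ((k:ℝ)+1) * R ^ k) := by rw [hr]; ring

lemma summable_G {ν : ℝ} (hν : -1 < ν) (x : ℝ) :
    Summable (fun k : ℕ => aCoef ν k * x ^ k) := by
  apply Summable.of_norm_bounded (summable_aux hν (abs_nonneg x))
  intro k
  rw [norm_mul, norm_pow, Real.norm_eq_abs, Real.norm_eq_abs]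
  have h1 : 0 ≤ |aCoef ν k| * |x| ^ k := by positivity
  nlinarith [abs_nonneg (aCoef ν k), pow_nonneg (abs_nonneg x) k]

noncomputable def G (ν : ℝ) (x : ℝ) : ℝ := ∑' k : ℕ, aCoef ν k * x ^ k

lemma besselI_eq (ν r : ℝ) : besselI ν r = G ν (r ^ 2) := by
  unfold besselI G
  refine tsum_congr fun k => ?_
  have h4 : (2:ℝ) ^ (2 * (k:ℝ) + ν) = 4 ^ k * (2:ℝ) ^ ν := by
    rw [Real.rpow_add (by norm_num : (0:ℝ) < 2)]
    congr 1
    rw [show (2 * (k:ℝ)) = (((2*k : ℕ)):ℝ) by push_cast; ring, Real.rpow_natCast, pow_mul]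
    norm_num
  rw [h4, aCoef, ← pow_mul]
  ring

lemma G_zero (ν : ℝ) : G ν 0 = aCoef ν 0 := by
  unfold G
  rw [tsum_eq_single 0]
  · simp
  · intro b hb; simp [zero_pow hb]

lemma aCoef_zero_pos {ν : ℝ} (hν : -1 < ν) : 0 < aCoef ν 0 := by
  rw [aCoef]
  simp only [pow_zero]
  apply div_pos one_pos
  simpa using den_pos hν 0

lemma aCoef_shift {ν : ℝ} (k : ℕ) :
    aCoef ν (k+1) * ((k:ℝ)+1) = -(1/2) * aCoef (ν+1) k := by
  unfold aCoef
  have harg : ((k+1:ℕ):ℝ) + ν + 1 = (k:ℝ) + (ν+1) + 1 := by push_cast; ring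
  rw [harg]
  have hfac : ((k+1).factorial : ℝ) = ((k:ℝ)+1) * (k.factorial : ℝ) := by
    rw [Nat.factorial_succ]; push_cast; ring
  rw [hfac]
  have h2p : (2:ℝ) ^ (ν+1) = (2:ℝ) ^ ν * 2 := by
    rw [Real.rpow_add (by norm_num : (0:ℝ) < 2), Real.rpow_one]
  rw [h2p]
  have h1 : ((k.factorial : ℝ)) ≠ 0 := by exact_mod_cast k.factorial_ne_zero
  have h3 : ((4:ℝ) ^ k) ≠ 0 := by positivity
  have h4 : ((2:ℝ) ^ ν) ≠ 0 := ne_of_gt (Real.rpow_pos_of_pos (by norm_num) ν)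
  have h5 : (k:ℝ) + 1 ≠ 0 := by positivity
  by_cases h2 : Real.Gamma ((k : ℝ) + (ν+1) + 1) = 0
  · rw [h2]; simp [pow_succ]
  · field_simp
    ring

lemma deriv_summable {ν : ℝ} (hν : -1 < ν) (x : ℝ) :
    Summable (fun k : ℕ => aCoef ν k * ((k:ℝ) * x ^ (k-1))) := by
  set R : ℝ := |x| + 1 with hR
  have hR1 : (1:ℝ) ≤ R := by rw [hR]; linarith [abs_nonneg x]
  apply Summable.of_norm_bounded (summable_aux hν (le_trans zero_le_one hR1))
  intro k
  rw [norm_mul, norm_mul, norm_pow, Real.norm_eq_abs, Real.norm_eq_abs, Real.norm_eq_abs]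
  have hxR : |x| ≤ R := by rw [hR]; linarith
  have h1 : |x| ^ (k-1) ≤ R ^ (k-1) := pow_le_pow_left₀ (abs_nonneg x) hxR _
  have h2 : R ^ (k-1) ≤ R ^ k := pow_le_pow_right₀ hR1 (Nat.sub_le k 1)
  have h3 : |(k:ℝ)| = (k:ℝ) := abs_of_nonneg (Nat.cast_nonneg k)
  rw [h3]
  have h4 : (k:ℝ) ≤ (k:ℝ) + 1 := by linarith
  have h5 : 0 ≤ |aCoef ν k| := abs_nonneg _
  have h6 : (0:ℝ) ≤ (k:ℝ) := Nat.cast_nonneg k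
  calc |aCoef ν k| * ((k:ℝ) * |x| ^ (k-1))
      ≤ |aCoef ν k| * (((k:ℝ)+1) * R ^ k) := by
        apply mul_le_mul_of_nonneg_left _ h5
        apply mul_le_mul h4 (le_trans h1 h2) (by positivity) (by linarith)
    _ = |aCoef ν k| * ((k:ℝ)+1) * R ^ k := by ring

lemma G_hasDerivAt {ν : ℝ} (hν : -1 < ν) (x : ℝ) :
    HasDerivAt (G ν) (-(1/2) * G (ν+1) x) x := by
  set R : ℝ := |x| + 1 with hRdef
  have hR1 : (1:ℝ) ≤ R := by rw [hRdef]; linarith [abs_nonneg x]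
  have hR0 : (0:ℝ) ≤ R := le_trans zero_le_one hR1
  have main : HasDerivAt (G ν) (∑' k : ℕ, aCoef ν k * ((k:ℝ) * x ^ (k-1))) x := by
    have hxmem : x ∈ Set.Ioo (-R) R := by
      have hxR : |x| < R := by rw [hRdef]; linarith
      exact Set.mem_Ioo.mpr (abs_lt.mp hxR)
    apply hasDerivAt_tsum_of_isPreconnected (summable_aux hν hR0)
      (isOpen_Ioo (a := -R) (b := R)) ((convex_Ioo _ _).isPreconnected)
      (g := fun (k:ℕ) (y:ℝ) => aCoef ν k * y ^ k)
      (g' := fun (k:ℕ) (y:ℝ) => aCoef ν k * ((k:ℝ) * y ^ (k-1)))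
      (y₀ := x)
    · intro k y hy
      exact (hasDerivAt_pow k y).const_mul (aCoef ν k)
    · intro k y hy
      rw [Real.norm_eq_abs, abs_mul, abs_mul, abs_pow, abs_of_nonneg (Nat.cast_nonneg (α := ℝ) k)]
      have hyR : |y| ≤ R := by
        rw [abs_le]; exact ⟨hy.1.le, hy.2.le⟩
      have h1 : |y| ^ (k-1) ≤ R ^ (k-1) := pow_le_pow_left₀ (abs_nonneg y) hyR _
      have h2 : R ^ (k-1) ≤ R ^ k := pow_le_pow_right₀ hR1 (Nat.sub_le k 1)
      have h5 : 0 ≤ |aCoef ν k| := abs_nonneg _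
      calc |aCoef ν k| * ((k:ℝ) * |y| ^ (k-1))
          ≤ |aCoef ν k| * (((k:ℝ)+1) * R ^ k) := by
            apply mul_le_mul_of_nonneg_left _ h5
            apply mul_le_mul (by linarith) (le_trans h1 h2) (by positivity)
              (by positivity)
        _ = |aCoef ν k| * ((k:ℝ)+1) * R ^ k := by ring
    · exact hxmem
    · exact summable_G hν x
    · exact hxmem
  convert main using 1
  rw [Summable.tsum_eq_zero_add (deriv_summable hν x)]
  simp only [Nat.cast_zero, zero_mul, mul_zero, zero_add, Nat.cast_add, Nat.cast_one,
    Nat.add_sub_cancel]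
  have : ∀ k : ℕ, aCoef ν (k+1) * (((k:ℝ)+1) * x ^ k) = -(1/2) * (aCoef (ν+1) k * x ^ k) := by
    intro k
    have := aCoef_shift (ν := ν) k
    calc aCoef ν (k+1) * (((k:ℝ)+1) * x ^ k) = (aCoef ν (k+1) * ((k:ℝ)+1)) * x ^ k := by ring
      _ = (-(1/2) * aCoef (ν+1) k) * x ^ k := by rw [this]
      _ = -(1/2) * (aCoef (ν+1) k * x ^ k) := by ring
  rw [tsum_congr this, tsum_mul_left]
  rfl

lemma aCoef_rec0 {ν : ℝ} (hν0 : 0 < ν) : aCoef (ν-1) 0 = 2 * ν * aCoef ν 0 := by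
  unfold aCoef
  have h1 : ((0:ℕ):ℝ) + (ν-1) + 1 = ν := by push_cast; ring
  have h2 : ((0:ℕ):ℝ) + ν + 1 = ν + 1 := by push_cast; ring
  rw [h1, h2, Real.Gamma_add_one (ne_of_gt hν0)]
  have h2p : (2:ℝ) ^ (ν-1) = (2:ℝ) ^ ν / 2 := by
    rw [Real.rpow_sub (by norm_num : (0:ℝ) < 2), Real.rpow_one]
  rw [h2p]
  have hg : Real.Gamma ν ≠ 0 := ne_of_gt (Real.Gamma_pos_of_pos hν0)
  have h4 : ((2:ℝ) ^ ν) ≠ 0 := ne_of_gt (Real.rpow_pos_of_pos (by norm_num) ν)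
  field_simp

lemma aCoef_recS {ν : ℝ} (hν0 : 0 < ν) (k : ℕ) :
    aCoef (ν-1) (k+1) - 2 * ν * aCoef ν (k+1) = -aCoef (ν+1) k := by
  unfold aCoef
  have h1 : ((k+1:ℕ):ℝ) + (ν-1) + 1 = ((k:ℝ) + ν) + 1 := by push_cast; ring
  have h2 : ((k+1:ℕ):ℝ) + ν + 1 = (((k:ℝ) + ν) + 1) + 1 := by push_cast; ring
  have h3 : (k:ℝ) + (ν+1) + 1 = (((k:ℝ) + ν) + 1) + 1 := by ring
  have hkν : (0:ℝ) < (k:ℝ) + ν := by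
    have : (0:ℝ) ≤ (k:ℝ) := Nat.cast_nonneg k
    linarith
  rw [h1, h2, h3, Real.Gamma_add_one (by positivity : ((k:ℝ) + ν) + 1 ≠ 0),
    Real.Gamma_add_one (ne_of_gt hkν)]
  have h2p : (2:ℝ) ^ (ν-1) = (2:ℝ) ^ ν / 2 := by
    rw [Real.rpow_sub (by norm_num : (0:ℝ) < 2), Real.rpow_one]
  have h2q : (2:ℝ) ^ (ν+1) = (2:ℝ) ^ ν * 2 := by
    rw [Real.rpow_add (by norm_num : (0:ℝ) < 2), Real.rpow_one]
  rw [h2p, h2q]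
  have hfac : ((k+1).factorial : ℝ) = ((k:ℝ)+1) * (k.factorial : ℝ) := by
    rw [Nat.factorial_succ]; push_cast; ring
  rw [hfac]
  have hgpos : 0 < Real.Gamma ((k:ℝ) + ν) := Real.Gamma_pos_of_pos hkν
  have hg : Real.Gamma ((k:ℝ) + ν) ≠ 0 := ne_of_gt hgpos
  have hf : ((k.factorial : ℝ)) ≠ 0 := by exact_mod_cast k.factorial_ne_zero
  have h4k : ((4:ℝ) ^ k) ≠ 0 := by positivity
  have h4 : ((2:ℝ) ^ ν) ≠ 0 := ne_of_gt (Real.rpow_pos_of_pos (by norm_num) ν)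
  have h5 : (k:ℝ) + 1 ≠ 0 := by positivity
  have h6 : (k:ℝ) + ν ≠ 0 := ne_of_gt hkν
  have h7 : (k:ℝ) + ν + 1 ≠ 0 := by positivity
  field_simp
  ring

lemma G_rec {ν : ℝ} (hν0 : 0 < ν) (x : ℝ) :
    G (ν-1) x = 2 * ν * G ν x - x * G (ν+1) x := by
  have hν : (-1:ℝ) < ν := by linarith
  have hν' : (-1:ℝ) < ν - 1 := by linarith
  have hs1 : Summable (fun k : ℕ => aCoef (ν-1) k * x ^ k) := summable_G hν' x
  have hs2 : Summable (fun k : ℕ => 2 * ν * (aCoef ν k * x ^ k)) :=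
    (summable_G hν x).mul_left _
  have key : G (ν-1) x - 2 * ν * G ν x = -(x * G (ν+1) x) := by
    unfold G
    rw [← tsum_mul_left (a := 2*ν), ← Summable.tsum_sub hs1 hs2]
    rw [Summable.tsum_eq_zero_add (hs1.sub hs2)]
    have h0 : aCoef (ν-1) 0 * x ^ 0 - 2 * ν * (aCoef ν 0 * x ^ 0) = 0 := by
      rw [aCoef_rec0 hν0]; ring
    rw [h0, zero_add]
    have hterm : ∀ k : ℕ, aCoef (ν-1) (k+1) * x ^ (k+1) - 2 * ν * (aCoef ν (k+1) * x ^ (k+1))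
        = -(x * (aCoef (ν+1) k * x ^ k)) := by
      intro k
      have := aCoef_recS hν0 k
      calc aCoef (ν-1) (k+1) * x ^ (k+1) - 2 * ν * (aCoef ν (k+1) * x ^ (k+1))
          = (aCoef (ν-1) (k+1) - 2 * ν * aCoef ν (k+1)) * x ^ (k+1) := by ring
        _ = (-aCoef (ν+1) k) * x ^ (k+1) := by rw [this]
        _ = -(x * (aCoef (ν+1) k * x ^ k)) := by ring
    rw [tsum_congr hterm, tsum_neg, ← tsum_mul_left]
  linarith [key]

lemma besselI_hasDerivAt {ν : ℝ} (hν : -1 < ν) (r : ℝ) :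
    HasDerivAt (besselI ν) (-(r * besselI (ν+1) r)) r := by
  have hfun : besselI ν = fun s => G ν (s ^ 2) := funext (besselI_eq ν)
  rw [hfun]
  have h := (G_hasDerivAt hν (r ^ 2)).comp r (hasDerivAt_pow 2 r)
  refine h.congr_deriv ?_
  rw [besselI_eq]
  push_cast
  ring

lemma besselI_continuous {ν : ℝ} (hν : -1 < ν) : Continuous (besselI ν) :=
  continuous_iff_continuousAt.2 fun r => (besselI_hasDerivAt hν r).continuousAt

lemma besselI_zero_pos {ν : ℝ} (hν : -1 < ν) : 0 < besselI ν 0 := by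
  rw [besselI_eq]
  norm_num
  rw [G_zero]
  exact aCoef_zero_pos hν

end KernelAux

open KernelAux in
/-- Let `N ≥ 1`, `m ≥ 1` and `λ_m := j_{N/2,m}² − j_{N/2−1,1}²`. If
`ℓ, k ≥ 1` are integers with `ℓ² λ_m = j_{N/2,m}² − j_{N/2−1,k}²`, then `ℓ = 1` and `k = 1`. -/
theorem kernel_mode_uniqueness
    (j : ℝ → ℕ → ℝ)
    (hpos : ∀ μ : ℝ, -1 < μ → ∀ n : ℕ, 1 ≤ n → 0 < j μ n)
    (hzero : ∀ μ : ℝ, -1 < μ → ∀ n : ℕ, 1 ≤ n → besselJ μ (j μ n) = 0)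
    (hmono : ∀ μ : ℝ, -1 < μ → ∀ n m : ℕ, 1 ≤ n → n < m → j μ n < j μ m)
    (hall : ∀ μ : ℝ, -1 < μ → ∀ r : ℝ, 0 < r → besselJ μ r = 0 → ∃ n : ℕ, 1 ≤ n ∧ j μ n = r)
    (N m : ℕ) (hN : 1 ≤ N) (hm : 1 ≤ m)
    (lamm : ℝ) (hlamm : lamm = (j ((N : ℝ) / 2) m) ^ 2 - (j ((N : ℝ) / 2 - 1) 1) ^ 2)
    (ℓ k : ℕ) (hℓ : 1 ≤ ℓ) (hk : 1 ≤ k)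
    (heq : (ℓ : ℝ) ^ 2 * lamm = (j ((N : ℝ) / 2) m) ^ 2 - (j ((N : ℝ) / 2 - 1) k) ^ 2) :
    ℓ = 1 ∧ k = 1 := by
  have hN1 : (1:ℝ) ≤ (N:ℝ) := by exact_mod_cast hN
  set ν : ℝ := (N:ℝ) / 2 with hνdef
  set μ : ℝ := (N:ℝ) / 2 - 1 with hμdef
  have hν0 : 0 < ν := by rw [hνdef]; linarith
  have hν : (-1:ℝ) < ν := by linarith
  have hμ : (-1:ℝ) < μ := by rw [hμdef]; linarith
  have hμν : μ = ν - 1 := by rw [hμdef, hνdef]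
  have hνμ : ν = μ + 1 := by rw [hμdef, hνdef]; ring
  -- Step 1 : besselI μ is positive on [0, j μ 1)
  have hb0 : 0 < j μ 1 := hpos μ hμ 1 le_rfl
  have hne : ∀ s, 0 < s → s < j μ 1 → besselI μ s ≠ 0 := by
    intro s hs hsb hs0
    have hJ : besselJ μ s = 0 := by rw [besselJ, hs0, mul_zero]
    obtain ⟨n, hn1, hns⟩ := hall μ hμ s hs hJ
    rcases eq_or_lt_of_le hn1 with h | h
    · rw [← h] at hns; linarith [hns]
    · have := hmono μ hμ 1 n le_rfl h
      linarith [hns ▸ this]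
  have step1 : ∀ r, 0 ≤ r → r < j μ 1 → 0 < besselI μ r := by
    intro r hr0 hrb
    by_contra hle
    push_neg at hle
    have hr0' : 0 < r := by
      rcases hr0.eq_or_lt with h | h
      · exfalso; rw [← h] at hle; linarith [besselI_zero_pos hμ]
      · exact h
    have hlt : besselI μ r < 0 := lt_of_le_of_ne hle (hne r hr0' hrb)
    have hiv := intermediate_value_Icc' hr0'.le ((besselI_continuous hμ).continuousOn
      (s := Set.Icc 0 r))
    have h0mem : (0:ℝ) ∈ Set.Icc (besselI μ r) (besselI μ 0) :=
      ⟨hlt.le, (besselI_zero_pos hμ).le⟩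
    obtain ⟨c, hc, hfc⟩ := hiv h0mem
    have hc0 : 0 < c := by
      rcases hc.1.eq_or_lt with h | h
      · exfalso; rw [← h] at hfc; linarith [besselI_zero_pos hμ]
      · exact h
    exact hne c hc0 (lt_of_le_of_lt hc.2 hrb) hfc
  -- Step 2 : j μ 1 < j ν 1
  have hba : j μ 1 < j ν 1 := by
    by_contra hcon
    push_neg at hcon   -- j ν 1 ≤ j μ 1
    have ha0 : 0 < j ν 1 := hpos ν hν 1 le_rfl
    set a : ℝ := j ν 1 with hadef
    set F : ℝ → ℝ := fun r => r ^ N * besselI ν r with hFdef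
    have hder : ∀ r : ℝ, HasDerivAt F (r ^ (N-1) * besselI μ r) r := by
      intro r
      have h1 := (hasDerivAt_pow N r).mul (besselI_hasDerivAt hν r)
      refine h1.congr_deriv ?_
      symm
      have hrec : besselI μ r = 2 * ν * besselI ν r - r ^ 2 * besselI (ν+1) r := by
        rw [besselI_eq, besselI_eq, besselI_eq, hμν]
        exact G_rec hν0 (r ^ 2)
      rw [hrec]
      have h2ν : 2 * ν = (N:ℝ) := by rw [hνdef]; ring
      have hNpow : r ^ (N-1) * r ^ 2 = r ^ N * r := by
        rw [← pow_succ, ← pow_add]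
        congr 1
        omega
      calc r ^ (N-1) * (2 * ν * besselI ν r - r ^ 2 * besselI (ν+1) r)
          = 2 * ν * (r ^ (N-1) * besselI ν r) - (r ^ (N-1) * r ^ 2) * besselI (ν+1) r := by ring
        _ = (N:ℝ) * (r ^ (N-1) * besselI ν r) - (r ^ N * r) * besselI (ν+1) r := by
            rw [h2ν, hNpow]
        _ = (N:ℝ) * r ^ (N-1) * besselI ν r + r ^ N * -(r * besselI (ν+1) r) := by ring
    have hFmono : StrictMonoOn F (Set.Icc 0 a) := by
      apply strictMonoOn_of_deriv_pos (convex_Icc 0 a)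
      · exact ((continuous_pow N).mul (besselI_continuous hν)).continuousOn
      · intro x hx
        rw [interior_Icc] at hx
        rw [(hder x).deriv]
        have hIpos : 0 < besselI μ x := step1 x hx.1.le (lt_of_lt_of_le hx.2 hcon)
        have : 0 < x ^ (N-1) := pow_pos hx.1 _
        positivity
    have h0a : F 0 < F a :=
      hFmono ⟨le_rfl, ha0.le⟩ ⟨ha0.le, le_rfl⟩ ha0
    have hF0 : F 0 = 0 := by
      simp [hFdef, zero_pow (by omega : N ≠ 0)]
    have hFa : F a = 0 := by
      have hJ := hzero ν hν 1 le_rfl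
      rw [besselJ] at hJ
      have hpow : (0:ℝ) < a ^ ν := Real.rpow_pos_of_pos ha0 ν
      have hI : besselI ν a = 0 := by
        rcases mul_eq_zero.1 hJ with h | h
        · exact absurd h (ne_of_gt hpow)
        · exact h
      simp [hFdef, hI]
    rw [hF0, hFa] at h0a
    exact lt_irrefl 0 h0a
  -- Step 3 : arithmetic
  have hA0 : 0 < j ν m := hpos ν hν m hm
  have hbA : j μ 1 < j ν m := by
    rcases eq_or_lt_of_le hm with h | h
    · rw [← h]; exact hba
    · exact lt_trans hba (hmono ν hν 1 m le_rfl h)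
  have hBk0 : 0 < j μ k := hpos μ hμ k hk
  have hBk : j μ 1 ≤ j μ k := by
    rcases eq_or_lt_of_le hk with h | h
    · rw [← h]
    · exact (hmono μ hμ 1 k le_rfl h).le
  have hlampos : 0 < lamm := by
    rw [hlamm]
    nlinarith [hb0, hbA]
  have hBk2 : (j μ 1) ^ 2 ≤ (j μ k) ^ 2 := pow_le_pow_left₀ hb0.le hBk 2
  have hl1 : ℓ = 1 := by
    by_contra hc
    have h2ℓ : 2 ≤ ℓ := by omega
    have h2ℓ' : (2:ℝ) ≤ (ℓ:ℝ) := by exact_mod_cast h2ℓ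
    have hl4 : (4:ℝ) ≤ (ℓ:ℝ) ^ 2 := by nlinarith
    have h4l : 4 * lamm ≤ (ℓ:ℝ) ^ 2 * lamm :=
      mul_le_mul_of_nonneg_right hl4 hlampos.le
    rw [heq] at h4l
    rw [hlamm] at h4l hlampos
    linarith
  refine ⟨hl1, ?_⟩
  by_contra hc
  have h2k : 2 ≤ k := by omega
  have hlt := hmono μ hμ 1 k le_rfl (by omega)
  have hlt2 : (j μ 1) ^ 2 < (j μ k) ^ 2 := by nlinarith
  rw [hl1] at heq
  rw [hlamm] at heq
  norm_num at heq
  linarith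
end
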